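/- Let N ≥ 1 be an integer and 1 < p < q. Let v : [0,1] → ℝ be continuously differentiable with v'(r) ≥ 0 for all r, and assume the function W(r) := r^{N−1}·v'(r)^{p−1} is differentiable on (0,1) with W'(r) = r^{N−1}·(v(r)^{p−1} − v(r)^{q−1}) for every r ∈ (0,1). Then the function L_q(r) := ((p−1)/p)·v'(r)^p − v(r)^p/p + v(r)^q/q is nonincreasing on [0,1]. -/

import Mathlib

open Real Set Filter

/-- Along any `C^1` radial solution of the equation
`-(r^{N-1}(v')^{p-1})' = r^{N-1}(v^{q-1} - v^{p-1})` with `v' ≥ 0`, the quantity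
`L_q(r) = ((p-1)/p) v'(r)^p - v(r)^p/p + v(r)^q/q` is nonincreasing on `[0,1]`. -/
theorem Lq_antitone
    (N : ℕ) (hN : 1 ≤ N) (p q : ℝ) (hp : 1 < p) (hpq : p < q)
    (v v' : ℝ → ℝ)
    (hv : ∀ r ∈ Set.Icc (0:ℝ) 1, HasDerivWithinAt v (v' r) (Set.Icc (0:ℝ) 1) r)
    (hv'cont : ContinuousOn v' (Set.Icc (0:ℝ) 1))
    (hv'nonneg : ∀ r ∈ Set.Icc (0:ℝ) 1, 0 ≤ v' r)
    (hW : ∀ r ∈ Set.Ioo (0:ℝ) 1,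
      HasDerivAt (fun s => s ^ (N - 1) * v' s ^ (p - 1))
        (r ^ (N - 1) * (v r ^ (p - 1) - v r ^ (q - 1))) r) :
    AntitoneOn (fun r => (p - 1) / p * v' r ^ p - v r ^ p / p + v r ^ q / q)
      (Set.Icc (0:ℝ) 1) := by
  set n := N - 1 with hn
  have hp0 : (0:ℝ) < p := lt_trans one_pos hp
  have hq0 : (0:ℝ) < q := lt_trans hp0 hpq
  have hp1 : (0:ℝ) < p - 1 := by linarith
  have hp1' : p - 1 ≠ 0 := ne_of_gt hp1
  set a := p / (p - 1) with ha
  have ha1 : 1 ≤ a := by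
    rw [ha, le_div_iff₀ hp1]; linarith
  have hpa : (p - 1) * a = p := by
    rw [ha]; field_simp
  have ha1' : a - 1 = 1 / (p - 1) := by
    rw [ha]; field_simp; ring
  -- key derivative computation on the open interval
  have key : ∀ r ∈ Set.Ioo (0:ℝ) 1,
      HasDerivAt (fun s => (p - 1) / p * v' s ^ p - v s ^ p / p + v s ^ q / q)
        (-((n : ℝ) * v' r ^ (p - 1) * v' r / r)) r := by
    intro r hr
    have hr0 : r ≠ 0 := ne_of_gt hr.1
    have hrIcc : r ∈ Set.Icc (0:ℝ) 1 := Ioo_subset_Icc_self hr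
    have hv'r : 0 ≤ v' r := hv'nonneg r hrIcc
    have hvr : HasDerivAt v (v' r) r :=
      (hv r hrIcc).hasDerivAt (Icc_mem_nhds hr.1 hr.2)
    have hWr := hW r hr
    have hpow := hasDerivAt_pow n r
    have hdiv := hWr.div hpow (pow_ne_zero n hr0)
    have hev : (fun s => v' s ^ (p - 1))
        =ᶠ[nhds r] fun s => (s ^ n * v' s ^ (p - 1)) / s ^ n := by
      filter_upwards [eventually_ne_nhds hr0] with s hs
      rw [mul_div_cancel_left₀ _ (pow_ne_zero n hs)]
    have hg : HasDerivAt (fun s => v' s ^ (p - 1))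
        ((r ^ n * (v r ^ (p - 1) - v r ^ (q - 1)) * r ^ n
          - r ^ n * v' r ^ (p - 1) * ((n : ℝ) * r ^ (n - 1))) / (r ^ n) ^ 2) r :=
      hdiv.congr_of_eventuallyEq hev
    have hpow1 : (n : ℝ) * r ^ (n - 1) * r = (n : ℝ) * r ^ n := by
      cases n with
      | zero => simp
      | succ m => simp only [Nat.succ_sub_one, Nat.cast_succ, pow_succ]; ring
    have hg' : HasDerivAt (fun s => v' s ^ (p - 1))
        ((v r ^ (p - 1) - v r ^ (q - 1)) - (n : ℝ) * v' r ^ (p - 1) / r) r := by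
      convert hg using 1
      have hrn : (r : ℝ) ^ n ≠ 0 := pow_ne_zero n hr0
      field_simp
      linear_combination (v' r ^ (p - 1)) * hpow1
    -- derivative of v'^p
    have h1 := (Real.hasDerivAt_rpow_const (p := a) (Or.inr ha1)).comp r hg'
    have hgr : (v' r ^ (p - 1) : ℝ) ^ (a - 1) = v' r := by
      rw [ha1', ← Real.rpow_mul hv'r, mul_one_div, div_self hp1', Real.rpow_one]
    have hA : HasDerivAt (fun s => v' s ^ p)
        (a * v' r *
          ((v r ^ (p - 1) - v r ^ (q - 1)) - (n : ℝ) * v' r ^ (p - 1) / r)) r := by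
      have heq : (fun s => v' s ^ p)
          =ᶠ[nhds r] fun s => (v' s ^ (p - 1)) ^ a := by
        filter_upwards [isOpen_Ioo.mem_nhds hr] with s hs
        rw [← Real.rpow_mul (hv'nonneg s (Ioo_subset_Icc_self hs)), hpa]
      have := h1.congr_of_eventuallyEq heq
      simpa [hgr, mul_assoc] using this
    have hB : HasDerivAt (fun s => v s ^ p) (p * v r ^ (p - 1) * v' r) r := by
      have := (Real.hasDerivAt_rpow_const (p := p) (Or.inr hp.le)).comp r hvr
      simpa [mul_assoc, Function.comp_def] using this
    have hC : HasDerivAt (fun s => v s ^ q) (q * v r ^ (q - 1) * v' r) r := by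
      have := (Real.hasDerivAt_rpow_const (p := q) (Or.inr (by linarith))).comp r hvr
      simpa [mul_assoc, Function.comp_def] using this
    have hL := ((hA.const_mul ((p - 1) / p)).sub (hB.div_const p)).add (hC.div_const q)
    refine HasDerivAt.congr_deriv hL ?_
    have hpne : p ≠ 0 := hp0.ne'
    have hqne : q ≠ 0 := hq0.ne'
    rw [ha]
    field_simp
    ring
  -- conclude
  apply antitoneOn_of_deriv_nonpos (convex_Icc 0 1)
  · have hvc : ContinuousOn v (Set.Icc (0:ℝ) 1) := fun r hr => (hv r hr).continuousWithinAt
    apply ContinuousOn.add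
    apply ContinuousOn.sub
    · exact continuousOn_const.mul (hv'cont.rpow_const (fun x hx => Or.inr hp0.le))
    · exact (hvc.rpow_const (fun x hx => Or.inr hp0.le)).div_const _
    · exact (hvc.rpow_const (fun x hx => Or.inr hq0.le)).div_const _
  · rw [interior_Icc]
    exact fun r hr => (key r hr).differentiableAt.differentiableWithinAt
  · rw [interior_Icc]
    intro r hr
    rw [(key r hr).deriv]
    have : 0 ≤ (n : ℝ) * v' r ^ (p - 1) * v' r / r := by
      apply div_nonneg _ hr.1.le
      exact mul_nonneg (mul_nonneg (Nat.cast_nonneg n)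
        (Real.rpow_nonneg (hv'nonneg r (Ioo_subset_Icc_self hr)) _))
        (hv'nonneg r (Ioo_subset_Icc_self hr))
    linarith
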